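/- There exists a Hopf algebra structure over k on the algebra 𝒰(q) (i.e. a comultiplication Δ, counit ε and antipode making 𝒰(q) a Hopf algebra with its given algebra structure) such that Δ(K_i) = K_i ⊗ K_i, Δ(L_i) = L_i ⊗ L_i, Δ(E_i) = E_i ⊗ 1 + K_i ⊗ E_i, Δ(F_i) = F_i ⊗ L_i + 1 ⊗ F_i, ε(K_i) = ε(L_i) = 1, and ε(E_i) = ε(F_i) = 0 for all 1 ≤ i ≤ θ. -/

import Mathlib

/-- The generators `E_i, F_i, K_i, K_i⁻, L_i, L_i⁻` of the Drinfeld double `𝒰(q)`. -/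
inductive UGen (θ : ℕ) : Type
  | E : Fin θ → UGen θ
  | F : Fin θ → UGen θ
  | K : Fin θ → UGen θ
  | Kinv : Fin θ → UGen θ
  | L : Fin θ → UGen θ
  | Linv : Fin θ → UGen θ

/-- The toral generators, i.e. those among `K_i, K_i⁻, L_i, L_i⁻`. -/
def UGen.IsToral {θ : ℕ} : UGen θ → Prop
  | .E _ => False
  | .F _ => False
  | _ => True

variable (k : Type*) [Field k] {θ : ℕ}

/-- The image of a generator in the free algebra. -/
noncomputable def Ugen (g : UGen θ) : FreeAlgebra k (UGen θ) := FreeAlgebra.ι k g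

/-- The defining relations of the algebra `𝒰(q)`. -/
inductive URel (q : Fin θ → Fin θ → kˣ) :
    FreeAlgebra k (UGen θ) → FreeAlgebra k (UGen θ) → Prop
  | toral_comm (X Y : UGen θ) (hX : X.IsToral) (hY : Y.IsToral) :
      URel q (Ugen k X * Ugen k Y) (Ugen k Y * Ugen k X)
  | K_Kinv (i : Fin θ) : URel q (Ugen k (.K i) * Ugen k (.Kinv i)) 1
  | Kinv_K (i : Fin θ) : URel q (Ugen k (.Kinv i) * Ugen k (.K i)) 1
  | L_Linv (i : Fin θ) : URel q (Ugen k (.L i) * Ugen k (.Linv i)) 1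
  | Linv_L (i : Fin θ) : URel q (Ugen k (.Linv i) * Ugen k (.L i)) 1
  | K_E (i j : Fin θ) : URel q (Ugen k (.K i) * Ugen k (.E j))
      ((q i j : k) • (Ugen k (.E j) * Ugen k (.K i)))
  | L_E (i j : Fin θ) : URel q (Ugen k (.L i) * Ugen k (.E j))
      ((q j i : k)⁻¹ • (Ugen k (.E j) * Ugen k (.L i)))
  | K_F (i j : Fin θ) : URel q (Ugen k (.K i) * Ugen k (.F j))
      ((q i j : k)⁻¹ • (Ugen k (.F j) * Ugen k (.K i)))
  | L_F (i j : Fin θ) : URel q (Ugen k (.L i) * Ugen k (.F j))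
      ((q j i : k) • (Ugen k (.F j) * Ugen k (.L i)))
  | E_F (i j : Fin θ) : URel q (Ugen k (.E i) * Ugen k (.F j) - Ugen k (.F j) * Ugen k (.E i))
      (if i = j then Ugen k (.K i) - Ugen k (.L i) else 0)

/-- The algebra `𝒰(q)`: the quotient of the free algebra on the generators
`E_i, F_i, K_i, K_i⁻, L_i, L_i⁻` by the defining relations. -/
noncomputable abbrev UqAlgebra (q : Fin θ → Fin θ → kˣ) := RingQuot (URel k q)

variable (q : Fin θ → Fin θ → kˣ)

/-- The generator `E_i` of `𝒰(q)`. -/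
noncomputable def UE (i : Fin θ) : UqAlgebra k q := RingQuot.mkAlgHom k (URel k q) (Ugen k (.E i))
/-- The generator `F_i` of `𝒰(q)`. -/
noncomputable def UF (i : Fin θ) : UqAlgebra k q := RingQuot.mkAlgHom k (URel k q) (Ugen k (.F i))
/-- The generator `K_i` of `𝒰(q)`. -/
noncomputable def UK (i : Fin θ) : UqAlgebra k q := RingQuot.mkAlgHom k (URel k q) (Ugen k (.K i))
/-- The generator `K_i⁻` of `𝒰(q)`. -/
noncomputable def UKinv (i : Fin θ) : UqAlgebra k q :=
  RingQuot.mkAlgHom k (URel k q) (Ugen k (.Kinv i))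
/-- The generator `L_i` of `𝒰(q)`. -/
noncomputable def UL (i : Fin θ) : UqAlgebra k q := RingQuot.mkAlgHom k (URel k q) (Ugen k (.L i))
/-- The generator `L_i⁻` of `𝒰(q)`. -/
noncomputable def ULinv (i : Fin θ) : UqAlgebra k q :=
  RingQuot.mkAlgHom k (URel k q) (Ugen k (.Linv i))

open scoped TensorProduct


namespace UqAux

open MulOpposite TensorProduct

/-- The image of a generator in `𝒰(q)`. -/
noncomputable def Ud (g : UGen θ) : UqAlgebra k q :=
  RingQuot.mkAlgHom k (URel k q) (Ugen k g)

lemma relEq {x y : FreeAlgebra k (UGen θ)} (h : URel k q x y) :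
    RingQuot.mkAlgHom k (URel k q) x = RingQuot.mkAlgHom k (URel k q) y :=
  RingQuot.mkAlgHom_rel k h

lemma Ud_comm (X Y : UGen θ) (hX : X.IsToral) (hY : Y.IsToral) :
    Ud k q X * Ud k q Y = Ud k q Y * Ud k q X := by
  simpa only [map_mul, Ud] using relEq k q (URel.toral_comm X Y hX hY)

lemma K_Kinv (i : Fin θ) : Ud k q (.K i) * Ud k q (.Kinv i) = 1 := by
  simpa only [map_mul, map_one, Ud] using relEq k q (URel.K_Kinv i)

lemma Kinv_K (i : Fin θ) : Ud k q (.Kinv i) * Ud k q (.K i) = 1 := by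
  simpa only [map_mul, map_one, Ud] using relEq k q (URel.Kinv_K i)

lemma L_Linv (i : Fin θ) : Ud k q (.L i) * Ud k q (.Linv i) = 1 := by
  simpa only [map_mul, map_one, Ud] using relEq k q (URel.L_Linv i)

lemma Linv_L (i : Fin θ) : Ud k q (.Linv i) * Ud k q (.L i) = 1 := by
  simpa only [map_mul, map_one, Ud] using relEq k q (URel.Linv_L i)

lemma K_Kinv_mul (i : Fin θ) (x : UqAlgebra k q) :
    Ud k q (.K i) * (Ud k q (.Kinv i) * x) = x := by
  rw [← mul_assoc, K_Kinv, one_mul]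

lemma Kinv_K_mul (i : Fin θ) (x : UqAlgebra k q) :
    Ud k q (.Kinv i) * (Ud k q (.K i) * x) = x := by
  rw [← mul_assoc, Kinv_K, one_mul]

lemma L_Linv_mul (i : Fin θ) (x : UqAlgebra k q) :
    Ud k q (.L i) * (Ud k q (.Linv i) * x) = x := by
  rw [← mul_assoc, L_Linv, one_mul]

lemma Linv_L_mul (i : Fin θ) (x : UqAlgebra k q) :
    Ud k q (.Linv i) * (Ud k q (.L i) * x) = x := by
  rw [← mul_assoc, Linv_L, one_mul]

@[simp] lemma Uneg_mul (x y : UqAlgebra k q) : -x * y = -(x * y) := neg_mul x y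
@[simp] lemma Umul_neg (x y : UqAlgebra k q) : x * -y = -(x * y) := mul_neg x y
@[simp] lemma Uneg_mul_neg (x y : UqAlgebra k q) : -x * -y = x * y := neg_mul_neg x y
@[simp] lemma Usmul_neg (c : k) (x : UqAlgebra k q) : c • -x = -(c • x) := smul_neg c x
@[simp] lemma Uneg_add_cancel (x : UqAlgebra k q) : -x + x = 0 := neg_add_cancel x
@[simp] lemma Uadd_neg_cancel (x : UqAlgebra k q) : x + -x = 0 := add_neg_cancel x
lemma Uneg_inj {x y : UqAlgebra k q} (h : x = y) : -x = -y := by rw [h]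

lemma K_E (i j : Fin θ) : Ud k q (.K i) * Ud k q (.E j) =
    (q i j : k) • (Ud k q (.E j) * Ud k q (.K i)) := by
  simpa only [map_mul, map_smul, Ud] using relEq k q (URel.K_E i j)

lemma L_E (i j : Fin θ) : Ud k q (.L i) * Ud k q (.E j) =
    (q j i : k)⁻¹ • (Ud k q (.E j) * Ud k q (.L i)) := by
  simpa only [map_mul, map_smul, Ud] using relEq k q (URel.L_E i j)

lemma K_F (i j : Fin θ) : Ud k q (.K i) * Ud k q (.F j) =
    (q i j : k)⁻¹ • (Ud k q (.F j) * Ud k q (.K i)) := by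
  simpa only [map_mul, map_smul, Ud] using relEq k q (URel.K_F i j)

lemma L_F (i j : Fin θ) : Ud k q (.L i) * Ud k q (.F j) =
    (q j i : k) • (Ud k q (.F j) * Ud k q (.L i)) := by
  simpa only [map_mul, map_smul, Ud] using relEq k q (URel.L_F i j)

lemma E_F (i j : Fin θ) : Ud k q (.E i) * Ud k q (.F j) =
    Ud k q (.F j) * Ud k q (.E i) +
      (if i = j then Ud k q (.K i) - Ud k q (.L i) else 0) := by
  have h := relEq k q (URel.E_F i j)
  simp only [map_sub, map_mul, apply_ite (RingQuot.mkAlgHom k (URel k q)),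
    map_sub, map_zero] at h
  exact sub_eq_iff_eq_add'.mp h

section helpers

variable {B : Type*} [Ring B] [Algebra k B]

lemma swap_smul {c c' : k} (hcc : c * c' = 1) {x e : B}
    (h : x * e = c • (e * x)) : e * x = c' • (x * e) := by
  rw [h, smul_smul, mul_comm c' c, hcc, one_smul]

lemma inv_comm {x xi e : B} (h1 : x * xi = 1) (h2 : xi * x = 1) {c c' : k}
    (hcc : c * c' = 1) (h : x * e = c • (e * x)) :
    xi * e = c' • (e * xi) := by
  have hswap : e * x = c' • (x * e) := swap_smul k hcc h
  calc xi * e = xi * (e * (x * xi)) := by rw [h1, mul_one]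
    _ = xi * ((e * x) * xi) := by rw [mul_assoc]
    _ = xi * ((c' • (x * e)) * xi) := by rw [hswap]
    _ = c' • ((xi * x) * (e * xi)) := by
        simp only [smul_mul_assoc, mul_smul_comm, mul_assoc]
    _ = c' • (e * xi) := by rw [h2, one_mul]

lemma aux_move1 {a b g : B} {c : k} (hb : b * g = c • (g * b))
    (hcomm : a * g = g * a) : (a * b) * g = c • (g * (a * b)) := by
  rw [mul_assoc, hb, mul_smul_comm, ← mul_assoc, hcomm, mul_assoc]

lemma aux_move2 {a b g : B} {c : k} (ha : a * g = c • (g * a))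
    (hcomm : b * g = g * b) : (a * b) * g = c • (g * (a * b)) := by
  rw [mul_assoc, hcomm, ← mul_assoc, ha, smul_mul_assoc, mul_assoc]

end helpers

lemma q_mul_inv (i j : Fin θ) : (q i j : k) * (q i j : k)⁻¹ = 1 :=
  mul_inv_cancel₀ (q i j).ne_zero

lemma q_inv_mul (i j : Fin θ) : (q i j : k)⁻¹ * (q i j : k) = 1 :=
  inv_mul_cancel₀ (q i j).ne_zero

lemma Kinv_E (i j : Fin θ) : Ud k q (.Kinv i) * Ud k q (.E j) =
    (q i j : k)⁻¹ • (Ud k q (.E j) * Ud k q (.Kinv i)) :=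
  inv_comm k (K_Kinv k q i) (Kinv_K k q i) (q_mul_inv k q i j) (K_E k q i j)

lemma Linv_E (i j : Fin θ) : Ud k q (.Linv i) * Ud k q (.E j) =
    (q j i : k) • (Ud k q (.E j) * Ud k q (.Linv i)) :=
  inv_comm k (L_Linv k q i) (Linv_L k q i) (q_inv_mul k q j i) (L_E k q i j)

lemma Kinv_F (i j : Fin θ) : Ud k q (.Kinv i) * Ud k q (.F j) =
    (q i j : k) • (Ud k q (.F j) * Ud k q (.Kinv i)) :=
  inv_comm k (K_Kinv k q i) (Kinv_K k q i) (q_inv_mul k q i j) (K_F k q i j)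

lemma Linv_F (i j : Fin θ) : Ud k q (.Linv i) * Ud k q (.F j) =
    (q j i : k)⁻¹ • (Ud k q (.F j) * Ud k q (.Linv i)) :=
  inv_comm k (L_Linv k q i) (Linv_L k q i) (q_mul_inv k q j i) (L_F k q i j)

-- swapped commutation rules
lemma E_Kinv (i j : Fin θ) : Ud k q (.E j) * Ud k q (.Kinv i) =
    (q i j : k) • (Ud k q (.Kinv i) * Ud k q (.E j)) :=
  swap_smul k (q_inv_mul k q i j) (Kinv_E k q i j)

lemma E_Linv (i j : Fin θ) : Ud k q (.E j) * Ud k q (.Linv i) =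
    (q j i : k)⁻¹ • (Ud k q (.Linv i) * Ud k q (.E j)) :=
  swap_smul k (q_mul_inv k q j i) (Linv_E k q i j)

lemma F_Kinv (i j : Fin θ) : Ud k q (.F j) * Ud k q (.Kinv i) =
    (q i j : k)⁻¹ • (Ud k q (.Kinv i) * Ud k q (.F j)) :=
  swap_smul k (q_mul_inv k q i j) (Kinv_F k q i j)

lemma F_Linv (i j : Fin θ) : Ud k q (.F j) * Ud k q (.Linv i) =
    (q j i : k) • (Ud k q (.Linv i) * Ud k q (.F j)) :=
  swap_smul k (q_inv_mul k q j i) (Linv_F k q i j)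

lemma E_L (i j : Fin θ) : Ud k q (.E j) * Ud k q (.L i) =
    (q j i : k) • (Ud k q (.L i) * Ud k q (.E j)) :=
  swap_smul k (q_inv_mul k q j i) (L_E k q i j)

/-! ### The counit -/

/-- counit on generators -/
def epsg : UGen θ → k
  | .E _ => 0
  | .F _ => 0
  | .K _ => 1
  | .Kinv _ => 1
  | .L _ => 1
  | .Linv _ => 1

noncomputable def eps0 : FreeAlgebra k (UGen θ) →ₐ[k] k :=
  FreeAlgebra.lift k (epsg k)

@[simp] lemma eps0_Ugen (g : UGen θ) : eps0 k (Ugen k g) = epsg k g :=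
  FreeAlgebra.lift_ι_apply _ _

lemma eps0_rel : ∀ ⦃x y : FreeAlgebra k (UGen θ)⦄, URel k q x y → eps0 k x = eps0 k y := by
  intro x y h
  induction h with
  | toral_comm X Y hX hY =>
      cases X <;> cases Y <;> simp_all [UGen.IsToral, epsg]
  | K_Kinv i => simp [epsg]
  | Kinv_K i => simp [epsg]
  | L_Linv i => simp [epsg]
  | Linv_L i => simp [epsg]
  | K_E i j => simp [epsg]
  | L_E i j => simp [epsg]
  | K_F i j => simp [epsg]
  | L_F i j => simp [epsg]
  | E_F i j => simp [epsg, apply_ite (eps0 k)]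

noncomputable def counit : UqAlgebra k q →ₐ[k] k :=
  RingQuot.liftAlgHom k ⟨eps0 k, eps0_rel k q⟩

@[simp] lemma counit_Ud (g : UGen θ) : counit k q (Ud k q g) = epsg k g := by
  rw [Ud, counit, RingQuot.liftAlgHom_mkAlgHom_apply, eps0_Ugen]

/-! ### The comultiplication -/

/-- comultiplication on generators -/
noncomputable def cg : UGen θ → UqAlgebra k q ⊗[k] UqAlgebra k q
  | .E i => Ud k q (.E i) ⊗ₜ 1 + Ud k q (.K i) ⊗ₜ Ud k q (.E i)
  | .F i => Ud k q (.F i) ⊗ₜ Ud k q (.L i) + 1 ⊗ₜ Ud k q (.F i)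
  | .K i => Ud k q (.K i) ⊗ₜ Ud k q (.K i)
  | .Kinv i => Ud k q (.Kinv i) ⊗ₜ Ud k q (.Kinv i)
  | .L i => Ud k q (.L i) ⊗ₜ Ud k q (.L i)
  | .Linv i => Ud k q (.Linv i) ⊗ₜ Ud k q (.Linv i)

lemma cg_toral (X : UGen θ) (hX : X.IsToral) : cg k q X = Ud k q X ⊗ₜ Ud k q X := by
  cases X <;> first | rfl | exact hX.elim

noncomputable def comul0 : FreeAlgebra k (UGen θ) →ₐ[k] UqAlgebra k q ⊗[k] UqAlgebra k q :=
  FreeAlgebra.lift k (cg k q)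

@[simp] lemma comul0_Ugen (g : UGen θ) : comul0 k q (Ugen k g) = cg k q g :=
  FreeAlgebra.lift_ι_apply _ _

lemma comul0_rel : ∀ ⦃x y : FreeAlgebra k (UGen θ)⦄, URel k q x y →
    comul0 k q x = comul0 k q y := by
  intro x y h
  induction h with
  | toral_comm X Y hX hY =>
      simp only [map_mul, comul0_Ugen, cg_toral k q X hX, cg_toral k q Y hY,
        Algebra.TensorProduct.tmul_mul_tmul, Ud_comm k q X Y hX hY]
  | K_Kinv i =>
      simp [cg, Algebra.TensorProduct.tmul_mul_tmul, K_Kinv,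
        Algebra.TensorProduct.one_def]
  | Kinv_K i =>
      simp [cg, Algebra.TensorProduct.tmul_mul_tmul, Kinv_K,
        Algebra.TensorProduct.one_def]
  | L_Linv i =>
      simp [cg, Algebra.TensorProduct.tmul_mul_tmul, L_Linv,
        Algebra.TensorProduct.one_def]
  | Linv_L i =>
      simp [cg, Algebra.TensorProduct.tmul_mul_tmul, Linv_L,
        Algebra.TensorProduct.one_def]
  | K_E i j =>
      simp only [map_mul, map_smul, comul0_Ugen, cg, mul_add, add_mul,
        Algebra.TensorProduct.tmul_mul_tmul, mul_one, one_mul, smul_add]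
      rw [K_E k q i j, Ud_comm k q (.K i) (.K j) trivial trivial]
      simp [TensorProduct.smul_tmul', TensorProduct.tmul_smul]
  | L_E i j =>
      simp only [map_mul, map_smul, comul0_Ugen, cg, mul_add, add_mul,
        Algebra.TensorProduct.tmul_mul_tmul, mul_one, one_mul, smul_add]
      rw [L_E k q i j, Ud_comm k q (.L i) (.K j) trivial trivial]
      simp [TensorProduct.smul_tmul', TensorProduct.tmul_smul]
  | K_F i j =>
      simp only [map_mul, map_smul, comul0_Ugen, cg, mul_add, add_mul,
        Algebra.TensorProduct.tmul_mul_tmul, mul_one, one_mul, smul_add]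
      rw [K_F k q i j, Ud_comm k q (.K i) (.L j) trivial trivial]
      simp [TensorProduct.smul_tmul', TensorProduct.tmul_smul]
  | L_F i j =>
      simp only [map_mul, map_smul, comul0_Ugen, cg, mul_add, add_mul,
        Algebra.TensorProduct.tmul_mul_tmul, mul_one, one_mul, smul_add]
      rw [L_F k q i j, Ud_comm k q (.L i) (.L j) trivial trivial]
      simp [TensorProduct.smul_tmul', TensorProduct.tmul_smul]
  | E_F i j =>
      simp only [map_sub, map_mul, comul0_Ugen,
        apply_ite (comul0 k q), map_sub, map_zero]
      simp only [cg, mul_add, add_mul, Algebra.TensorProduct.tmul_mul_tmul,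
        one_mul, mul_one]
      rw [E_F k q i j, K_F k q i j, E_L k q j i]
      simp only [TensorProduct.tmul_smul, TensorProduct.smul_tmul', smul_smul,
        q_mul_inv k q, one_smul]
      by_cases h : i = j
      · subst h
        simp only [if_true, eq_self_iff_true, ite_true, add_tmul, sub_tmul,
          tmul_add, tmul_sub]
        abel
      · simp only [if_neg h, add_zero, zero_add, tmul_zero, zero_tmul]
        abel

noncomputable def comul : UqAlgebra k q →ₐ[k] UqAlgebra k q ⊗[k] UqAlgebra k q :=
  RingQuot.liftAlgHom k ⟨comul0 k q, comul0_rel k q⟩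

@[simp] lemma comul_Ud (g : UGen θ) : comul k q (Ud k q g) = cg k q g := by
  rw [Ud, comul, RingQuot.liftAlgHom_mkAlgHom_apply, comul0_Ugen]

/-! ### The antipode -/

/-- antipode on generators, valued in the opposite algebra -/
noncomputable def sg : UGen θ → (UqAlgebra k q)ᵐᵒᵖ
  | .E i => -op (Ud k q (.Kinv i) * Ud k q (.E i))
  | .F i => -op (Ud k q (.F i) * Ud k q (.Linv i))
  | .K i => op (Ud k q (.Kinv i))
  | .Kinv i => op (Ud k q (.K i))
  | .L i => op (Ud k q (.Linv i))
  | .Linv i => op (Ud k q (.L i))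

noncomputable def anti0 : FreeAlgebra k (UGen θ) →ₐ[k] (UqAlgebra k q)ᵐᵒᵖ :=
  FreeAlgebra.lift k (sg k q)

@[simp] lemma anti0_Ugen (g : UGen θ) : anti0 k q (Ugen k g) = sg k q g :=
  FreeAlgebra.lift_ι_apply _ _

lemma sg_toral (X : UGen θ) (hX : X.IsToral) : ∃ Y : UGen θ, Y.IsToral ∧ sg k q X = op (Ud k q Y) := by
  cases X with
  | E i => exact hX.elim
  | F i => exact hX.elim
  | K i => exact ⟨.Kinv i, trivial, rfl⟩
  | Kinv i => exact ⟨.K i, trivial, rfl⟩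
  | L i => exact ⟨.Linv i, trivial, rfl⟩
  | Linv i => exact ⟨.L i, trivial, rfl⟩

lemma anti_EF (i j : Fin θ) :
    (Ud k q (.Kinv i) * Ud k q (.E i)) * (Ud k q (.F j) * Ud k q (.Linv j)) =
      (Ud k q (.F j) * Ud k q (.Linv j)) * (Ud k q (.Kinv i) * Ud k q (.E i)) +
        (if i = j then Ud k q (.Linv i) - Ud k q (.Kinv i) else 0) := by
  have step1 : (Ud k q (.F j) * Ud k q (.E i)) * Ud k q (.Linv j) =
      (q i j : k)⁻¹ • (Ud k q (.F j) * (Ud k q (.Linv j) * Ud k q (.E i))) := by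
    rw [mul_assoc, E_Linv k q j i, mul_smul_comm]
  have step2 : Ud k q (.Kinv i) * ((Ud k q (.F j) * Ud k q (.E i)) * Ud k q (.Linv j)) =
      (q i j : k)⁻¹ • ((Ud k q (.Kinv i) * Ud k q (.F j)) * (Ud k q (.Linv j) * Ud k q (.E i))) := by
    rw [step1, mul_smul_comm, ← mul_assoc]
  have step3 : (Ud k q (.Kinv i) * Ud k q (.F j)) * (Ud k q (.Linv j) * Ud k q (.E i)) =
      (q i j : k) • ((Ud k q (.F j) * Ud k q (.Kinv i)) * (Ud k q (.Linv j) * Ud k q (.E i))) := by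
    rw [Kinv_F k q i j, smul_mul_assoc]
  have step4 : (Ud k q (.F j) * Ud k q (.Kinv i)) * (Ud k q (.Linv j) * Ud k q (.E i)) =
      (Ud k q (.F j) * Ud k q (.Linv j)) * (Ud k q (.Kinv i) * Ud k q (.E i)) := by
    rw [mul_assoc, ← mul_assoc (Ud k q (.Kinv i)),
      Ud_comm k q (.Kinv i) (.Linv j) trivial trivial,
      mul_assoc (Ud k q (.Linv j)), ← mul_assoc]
  have step5 : Ud k q (.Kinv i) * ((Ud k q (.F j) * Ud k q (.E i)) * Ud k q (.Linv j)) =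
      (Ud k q (.F j) * Ud k q (.Linv j)) * (Ud k q (.Kinv i) * Ud k q (.E i)) := by
    rw [step2, step3, smul_smul, q_inv_mul, one_smul, step4]
  have step6 : Ud k q (.Kinv i) *
      ((if i = j then Ud k q (.K i) - Ud k q (.L i) else 0) * Ud k q (.Linv j)) =
      (if i = j then Ud k q (.Linv i) - Ud k q (.Kinv i) else 0) := by
    by_cases h : i = j
    · subst h
      rw [if_pos rfl, if_pos rfl, sub_mul, mul_sub, ← mul_assoc, Kinv_K k q i, one_mul,
        L_Linv k q i, mul_one]
    · rw [if_neg h, if_neg h, zero_mul, mul_zero]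
  calc (Ud k q (.Kinv i) * Ud k q (.E i)) * (Ud k q (.F j) * Ud k q (.Linv j))
      = Ud k q (.Kinv i) * ((Ud k q (.E i) * Ud k q (.F j)) * Ud k q (.Linv j)) := by
        rw [mul_assoc, mul_assoc]
    _ = Ud k q (.Kinv i) * (((Ud k q (.F j) * Ud k q (.E i)) +
          (if i = j then Ud k q (.K i) - Ud k q (.L i) else 0)) * Ud k q (.Linv j)) := by
        rw [E_F k q i j]
    _ = Ud k q (.Kinv i) * ((Ud k q (.F j) * Ud k q (.E i)) * Ud k q (.Linv j)) +
        Ud k q (.Kinv i) *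
          ((if i = j then Ud k q (.K i) - Ud k q (.L i) else 0) * Ud k q (.Linv j)) := by
        rw [add_mul, mul_add]
    _ = (Ud k q (.F j) * Ud k q (.Linv j)) * (Ud k q (.Kinv i) * Ud k q (.E i)) +
        (if i = j then Ud k q (.Linv i) - Ud k q (.Kinv i) else 0) := by
        rw [step5, step6]

lemma anti_EF' (i j : Fin θ) :
    (Ud k q (.F j) * Ud k q (.Linv j)) * (Ud k q (.Kinv i) * Ud k q (.E i)) -
      (Ud k q (.Kinv i) * Ud k q (.E i)) * (Ud k q (.F j) * Ud k q (.Linv j)) =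
      (if i = j then Ud k q (.Kinv i) - Ud k q (.Linv i) else 0) := by
  rw [anti_EF k q i j]
  by_cases h : i = j <;> simp [h, neg_sub]

lemma anti0_rel : ∀ ⦃x y : FreeAlgebra k (UGen θ)⦄, URel k q x y →
    anti0 k q x = anti0 k q y := by
  intro x y h
  induction h with
  | toral_comm X Y hX hY =>
      obtain ⟨X', hX', hXe⟩ := sg_toral k q X hX
      obtain ⟨Y', hY', hYe⟩ := sg_toral k q Y hY
      simp only [map_mul, anti0_Ugen, hXe, hYe, ← op_mul,
        Ud_comm k q Y' X' hY' hX']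
  | K_Kinv i =>
      simp only [map_mul, map_one, anti0_Ugen, sg, ← op_mul, K_Kinv k q i, op_one]
  | Kinv_K i =>
      simp only [map_mul, map_one, anti0_Ugen, sg, ← op_mul, Kinv_K k q i, op_one]
  | L_Linv i =>
      simp only [map_mul, map_one, anti0_Ugen, sg, ← op_mul, L_Linv k q i, op_one]
  | Linv_L i =>
      simp only [map_mul, map_one, anti0_Ugen, sg, ← op_mul, Linv_L k q i, op_one]
  | K_E i j =>
      apply MulOpposite.unop_injective
      simp only [map_mul, map_smul, anti0_Ugen, sg, unop_mul, unop_smul, unop_neg,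
        unop_op]
      rw [Uneg_mul, Umul_neg, Usmul_neg]
      exact Uneg_inj k q (aux_move1 k (E_Kinv k q i j)
        (Ud_comm k q (.Kinv j) (.Kinv i) trivial trivial))
  | L_E i j =>
      apply MulOpposite.unop_injective
      simp only [map_mul, map_smul, anti0_Ugen, sg, unop_mul, unop_smul, unop_neg,
        unop_op]
      rw [Uneg_mul, Umul_neg, Usmul_neg]
      exact Uneg_inj k q (aux_move1 k (E_Linv k q i j)
        (Ud_comm k q (.Kinv j) (.Linv i) trivial trivial))
  | K_F i j =>
      apply MulOpposite.unop_injective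
      simp only [map_mul, map_smul, anti0_Ugen, sg, unop_mul, unop_smul, unop_neg,
        unop_op]
      rw [Uneg_mul, Umul_neg, Usmul_neg]
      exact Uneg_inj k q (aux_move2 k (F_Kinv k q i j)
        (Ud_comm k q (.Linv j) (.Kinv i) trivial trivial))
  | L_F i j =>
      apply MulOpposite.unop_injective
      simp only [map_mul, map_smul, anti0_Ugen, sg, unop_mul, unop_smul, unop_neg,
        unop_op]
      rw [Uneg_mul, Umul_neg, Usmul_neg]
      exact Uneg_inj k q (aux_move2 k (F_Linv k q i j)
        (Ud_comm k q (.Linv j) (.Linv i) trivial trivial))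
  | E_F i j =>
      apply MulOpposite.unop_injective
      simp only [map_sub, map_mul, anti0_Ugen, sg, apply_ite (anti0 k q), map_sub,
        map_zero, unop_sub, unop_mul, unop_neg, unop_op, unop_zero, Uneg_mul_neg,
        apply_ite unop]
      exact anti_EF' k q i j

noncomputable def antiA : UqAlgebra k q →ₐ[k] (UqAlgebra k q)ᵐᵒᵖ :=
  RingQuot.liftAlgHom k ⟨anti0 k q, anti0_rel k q⟩

noncomputable def antip : UqAlgebra k q →ₗ[k] UqAlgebra k q :=
  (opLinearEquiv k).symm.toLinearMap ∘ₗ (antiA k q).toLinearMap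

lemma antip_apply (x : UqAlgebra k q) : antip k q x = unop (antiA k q x) := rfl

lemma antip_mul (x y : UqAlgebra k q) : antip k q (x * y) = antip k q y * antip k q x := by
  simp [antip_apply, map_mul]

@[simp] lemma antip_one : antip k q 1 = 1 := by
  simp [antip_apply, map_one]

@[simp] lemma antip_Ud (g : UGen θ) : antip k q (Ud k q g) = unop (sg k q g) := by
  rw [antip_apply, antiA, Ud, RingQuot.liftAlgHom_mkAlgHom_apply, anti0_Ugen]

@[simp] lemma antip_mk_ι (g : UGen θ) :
    antip k q (RingQuot.mkAlgHom k (URel k q) (FreeAlgebra.ι k g)) = unop (sg k q g) :=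
  antip_Ud k q g

@[simp] lemma comul_mk_ι (g : UGen θ) :
    comul k q (RingQuot.mkAlgHom k (URel k q) (FreeAlgebra.ι k g)) = cg k q g :=
  comul_Ud k q g

@[simp] lemma counit_mk_ι (g : UGen θ) :
    counit k q (RingQuot.mkAlgHom k (URel k q) (FreeAlgebra.ι k g)) = epsg k g :=
  counit_Ud k q g

/-! ### Coassociativity and counit axioms, at the level of algebra maps -/

lemma coassoc_alg :
    (Algebra.TensorProduct.assoc k k k (UqAlgebra k q) (UqAlgebra k q)
        (UqAlgebra k q)).toAlgHom.comp
      ((Algebra.TensorProduct.map (comul k q) (AlgHom.id k (UqAlgebra k q))).comp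
        (comul k q)) =
    (Algebra.TensorProduct.map (AlgHom.id k (UqAlgebra k q)) (comul k q)).comp
      (comul k q) := by
  apply RingQuot.ringQuot_ext'
  apply FreeAlgebra.hom_ext
  funext g
  cases g <;>
    simp [cg, Algebra.TensorProduct.one_def, TensorProduct.add_tmul,
      TensorProduct.tmul_add, add_assoc]

lemma counit_left_alg :
    (Algebra.TensorProduct.lid k (UqAlgebra k q)).toAlgHom.comp
      ((Algebra.TensorProduct.map (counit k q) (AlgHom.id k (UqAlgebra k q))).comp
        (comul k q)) = AlgHom.id k (UqAlgebra k q) := by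
  apply RingQuot.ringQuot_ext'
  apply FreeAlgebra.hom_ext
  funext g
  cases g <;> simp [cg, epsg, Ud, Ugen]

lemma counit_right_alg :
    (Algebra.TensorProduct.rid k k (UqAlgebra k q)).toAlgHom.comp
      ((Algebra.TensorProduct.map (AlgHom.id k (UqAlgebra k q)) (counit k q)).comp
        (comul k q)) = AlgHom.id k (UqAlgebra k q) := by
  apply RingQuot.ringQuot_ext'
  apply FreeAlgebra.hom_ext
  funext g
  cases g <;> simp [cg, epsg, Ud, Ugen]

/-! ### bridges between linear and algebraic tensor maps -/

lemma bridge_map_left :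
    TensorProduct.map (comul k q).toLinearMap LinearMap.id =
      (Algebra.TensorProduct.map (comul k q) (AlgHom.id k (UqAlgebra k q))).toLinearMap :=
  TensorProduct.ext' fun _ _ => rfl

lemma bridge_map_right :
    TensorProduct.map LinearMap.id (comul k q).toLinearMap =
      (Algebra.TensorProduct.map (AlgHom.id k (UqAlgebra k q)) (comul k q)).toLinearMap :=
  TensorProduct.ext' fun _ _ => rfl

lemma bridge_counit_left :
    TensorProduct.map (counit k q).toLinearMap LinearMap.id =
      (Algebra.TensorProduct.map (counit k q) (AlgHom.id k (UqAlgebra k q))).toLinearMap :=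
  TensorProduct.ext' fun _ _ => rfl

lemma bridge_counit_right :
    TensorProduct.map LinearMap.id (counit k q).toLinearMap =
      (Algebra.TensorProduct.map (AlgHom.id k (UqAlgebra k q)) (counit k q)).toLinearMap :=
  TensorProduct.ext' fun _ _ => rfl

/-! ### Antipode axioms -/

lemma T_right (b b' : UqAlgebra k q) (t : UqAlgebra k q ⊗[k] UqAlgebra k q) :
    LinearMap.mul' k (UqAlgebra k q)
        (TensorProduct.map (antip k q) LinearMap.id (t * (b ⊗ₜ[k] b'))) =
      antip k q b *
        LinearMap.mul' k (UqAlgebra k q)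
          (TensorProduct.map (antip k q) LinearMap.id t) * b' := by
  induction t using TensorProduct.induction_on with
  | zero => simp
  | tmul a a' =>
      simp [Algebra.TensorProduct.tmul_mul_tmul, antip_mul, LinearMap.mul'_apply,
        mul_assoc]
  | add u v hu hv => simp [add_mul, mul_add, hu, hv]

lemma T_factor (t : UqAlgebra k q ⊗[k] UqAlgebra k q) (c : k)
    (ht : LinearMap.mul' k (UqAlgebra k q)
        (TensorProduct.map (antip k q) LinearMap.id t) = c • 1)
    (s : UqAlgebra k q ⊗[k] UqAlgebra k q) :
    LinearMap.mul' k (UqAlgebra k q)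
        (TensorProduct.map (antip k q) LinearMap.id (t * s)) =
      c • LinearMap.mul' k (UqAlgebra k q)
        (TensorProduct.map (antip k q) LinearMap.id s) := by
  induction s using TensorProduct.induction_on with
  | zero => simp
  | tmul b b' =>
      rw [T_right, ht]
      simp [LinearMap.mul'_apply, mul_smul_comm, smul_mul_assoc]
  | add u v hu hv => simp [mul_add, hu, hv]

lemma T'_left (a a' : UqAlgebra k q) (s : UqAlgebra k q ⊗[k] UqAlgebra k q) :
    LinearMap.mul' k (UqAlgebra k q)
        (TensorProduct.map LinearMap.id (antip k q) ((a ⊗ₜ[k] a') * s)) =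
      a * LinearMap.mul' k (UqAlgebra k q)
          (TensorProduct.map LinearMap.id (antip k q) s) * antip k q a' := by
  induction s using TensorProduct.induction_on with
  | zero => simp
  | tmul b b' =>
      simp [Algebra.TensorProduct.tmul_mul_tmul, antip_mul, LinearMap.mul'_apply,
        mul_assoc]
  | add u v hu hv => simp [mul_add, add_mul, hu, hv]

lemma T'_factor (s : UqAlgebra k q ⊗[k] UqAlgebra k q) (c : k)
    (hs : LinearMap.mul' k (UqAlgebra k q)
        (TensorProduct.map LinearMap.id (antip k q) s) = c • 1)
    (t : UqAlgebra k q ⊗[k] UqAlgebra k q) :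
    LinearMap.mul' k (UqAlgebra k q)
        (TensorProduct.map LinearMap.id (antip k q) (t * s)) =
      c • LinearMap.mul' k (UqAlgebra k q)
        (TensorProduct.map LinearMap.id (antip k q) t) := by
  induction t using TensorProduct.induction_on with
  | zero => simp
  | tmul a a' =>
      rw [T'_left, hs]
      simp [LinearMap.mul'_apply, mul_smul_comm, smul_mul_assoc]
  | add u v hu hv => simp [add_mul, hu, hv]

lemma antipode_left (x : UqAlgebra k q) :
    LinearMap.mul' k (UqAlgebra k q)
        (TensorProduct.map (antip k q) LinearMap.id (comul k q x)) =
      counit k q x • 1 := by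
  obtain ⟨y, rfl⟩ := RingQuot.mkAlgHom_surjective k (URel k q) x
  induction y using FreeAlgebra.induction with
  | grade0 r =>
      simp [AlgHom.commutes, Algebra.algebraMap_eq_smul_one,
        Algebra.TensorProduct.one_def, LinearMap.mul'_apply]
  | grade1 g =>
      cases g <;>
        simp [cg, sg, epsg, LinearMap.mul'_apply, Kinv_K, K_Kinv, Linv_L, L_Linv,
          K_Kinv_mul, Kinv_K_mul, L_Linv_mul, Linv_L_mul, mul_assoc, neg_mul,
          mul_neg, mul_one, one_mul, neg_add_cancel, add_neg_cancel]
  | mul a b ha hb =>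
      rw [map_mul, map_mul, T_factor k q _ _ ha, hb, smul_smul, map_mul]
  | add a b ha hb =>
      simp only [map_add, ha, hb, add_smul]

lemma antipode_right (x : UqAlgebra k q) :
    LinearMap.mul' k (UqAlgebra k q)
        (TensorProduct.map LinearMap.id (antip k q) (comul k q x)) =
      counit k q x • 1 := by
  obtain ⟨y, rfl⟩ := RingQuot.mkAlgHom_surjective k (URel k q) x
  induction y using FreeAlgebra.induction with
  | grade0 r =>
      simp [AlgHom.commutes, Algebra.algebraMap_eq_smul_one,
        Algebra.TensorProduct.one_def, LinearMap.mul'_apply]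
  | grade1 g =>
      cases g <;>
        simp [cg, sg, epsg, LinearMap.mul'_apply, Kinv_K, K_Kinv, Linv_L, L_Linv,
          K_Kinv_mul, Kinv_K_mul, L_Linv_mul, Linv_L_mul, mul_assoc, neg_mul,
          mul_neg, mul_one, one_mul, neg_add_cancel, add_neg_cancel]
  | mul a b ha hb =>
      rw [map_mul, map_mul, T'_factor k q _ _ hb, ha, smul_smul,
        mul_comm (counit k q _), map_mul]
  | add a b ha hb =>
      simp only [map_add, ha, hb, add_smul]

end UqAux


/-- There is a Hopf algebra structure on `𝒰(q)` (comultiplication and counit are algebra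
homomorphisms, coassociative and counital, with an antipode), compatible with its given
algebra structure, such that `Δ(K_i) = K_i ⊗ K_i`, `Δ(L_i) = L_i ⊗ L_i`,
`Δ(E_i) = E_i ⊗ 1 + K_i ⊗ E_i`, `Δ(F_i) = F_i ⊗ L_i + 1 ⊗ F_i`, `ε(K_i) = ε(L_i) = 1`
and `ε(E_i) = ε(F_i) = 0`. -/


theorem UqAlgebra_hopf :
    ∃ (comul : UqAlgebra k q →ₐ[k] UqAlgebra k q ⊗[k] UqAlgebra k q)
      (counit : UqAlgebra k q →ₐ[k] k)
      (antip : UqAlgebra k q →ₗ[k] UqAlgebra k q),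
    -- coassociativity
    ((TensorProduct.assoc k (UqAlgebra k q) (UqAlgebra k q) (UqAlgebra k q)).toLinearMap ∘ₗ
        TensorProduct.map comul.toLinearMap LinearMap.id ∘ₗ comul.toLinearMap =
      TensorProduct.map LinearMap.id comul.toLinearMap ∘ₗ comul.toLinearMap) ∧
    -- counit axioms
    ((TensorProduct.lid k (UqAlgebra k q)).toLinearMap ∘ₗ
        TensorProduct.map counit.toLinearMap LinearMap.id ∘ₗ comul.toLinearMap =
      LinearMap.id) ∧
    ((TensorProduct.rid k (UqAlgebra k q)).toLinearMap ∘ₗ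
        TensorProduct.map LinearMap.id counit.toLinearMap ∘ₗ comul.toLinearMap =
      LinearMap.id) ∧
    -- antipode axioms
    (LinearMap.mul' k (UqAlgebra k q) ∘ₗ
        TensorProduct.map antip LinearMap.id ∘ₗ comul.toLinearMap =
      Algebra.linearMap k (UqAlgebra k q) ∘ₗ counit.toLinearMap) ∧
    (LinearMap.mul' k (UqAlgebra k q) ∘ₗ
        TensorProduct.map LinearMap.id antip ∘ₗ comul.toLinearMap =
      Algebra.linearMap k (UqAlgebra k q) ∘ₗ counit.toLinearMap) ∧
    -- prescribed values of the comultiplication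
    (∀ i, comul (UK k q i) = UK k q i ⊗ₜ[k] UK k q i) ∧
    (∀ i, comul (UL k q i) = UL k q i ⊗ₜ[k] UL k q i) ∧
    (∀ i, comul (UE k q i) = UE k q i ⊗ₜ[k] 1 + UK k q i ⊗ₜ[k] UE k q i) ∧
    (∀ i, comul (UF k q i) = UF k q i ⊗ₜ[k] UL k q i + 1 ⊗ₜ[k] UF k q i) ∧
    -- prescribed values of the counit
    (∀ i, counit (UK k q i) = 1) ∧
    (∀ i, counit (UL k q i) = 1) ∧
    (∀ i, counit (UE k q i) = 0) ∧
    (∀ i, counit (UF k q i) = 0) := by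
  refine ⟨UqAux.comul k q, UqAux.counit k q, UqAux.antip k q, ?_, ?_, ?_, ?_, ?_,
    fun i => UqAux.comul_Ud k q (.K i), fun i => UqAux.comul_Ud k q (.L i),
    fun i => UqAux.comul_Ud k q (.E i), fun i => UqAux.comul_Ud k q (.F i),
    fun i => UqAux.counit_Ud k q (.K i), fun i => UqAux.counit_Ud k q (.L i),
    fun i => UqAux.counit_Ud k q (.E i), fun i => UqAux.counit_Ud k q (.F i)⟩
  · have H := congrArg AlgHom.toLinearMap (UqAux.coassoc_alg k q)
    simp only [AlgHom.comp_toLinearMap] at H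
    rw [UqAux.bridge_map_left, UqAux.bridge_map_right,
      show (TensorProduct.assoc k (UqAlgebra k q) (UqAlgebra k q)
          (UqAlgebra k q)).toLinearMap =
        (Algebra.TensorProduct.assoc k k k (UqAlgebra k q) (UqAlgebra k q)
          (UqAlgebra k q)).toAlgHom.toLinearMap from rfl]
    exact H
  · have H := congrArg AlgHom.toLinearMap (UqAux.counit_left_alg k q)
    simp only [AlgHom.comp_toLinearMap] at H
    rw [UqAux.bridge_counit_left,
      show (TensorProduct.lid k (UqAlgebra k q)).toLinearMap =
        (Algebra.TensorProduct.lid k (UqAlgebra k q)).toAlgHom.toLinearMap from rfl,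
      show (LinearMap.id : UqAlgebra k q →ₗ[k] UqAlgebra k q) =
        (AlgHom.id k (UqAlgebra k q)).toLinearMap from rfl]
    exact H
  · have H := congrArg AlgHom.toLinearMap (UqAux.counit_right_alg k q)
    simp only [AlgHom.comp_toLinearMap] at H
    rw [UqAux.bridge_counit_right,
      show (TensorProduct.rid k (UqAlgebra k q)).toLinearMap =
        (Algebra.TensorProduct.rid k k (UqAlgebra k q)).toAlgHom.toLinearMap from
        TensorProduct.ext' fun a c => by
          simp [Algebra.TensorProduct.rid_tmul],
      show (LinearMap.id : UqAlgebra k q →ₗ[k] UqAlgebra k q) =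
        (AlgHom.id k (UqAlgebra k q)).toLinearMap from rfl]
    exact H
  · apply LinearMap.ext
    intro x
    simp only [LinearMap.comp_apply, AlgHom.toLinearMap_apply, Algebra.linearMap_apply]
    rw [UqAux.antipode_left k q x, Algebra.algebraMap_eq_smul_one]
  · apply LinearMap.ext
    intro x
    simp only [LinearMap.comp_apply, AlgHom.toLinearMap_apply, Algebra.linearMap_apply]
    rw [UqAux.antipode_right k q x, Algebra.algebraMap_eq_smul_one]
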